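/- The poset R₀ (triples ⟨t, f⃗, g⟩ with ⟨t, f⃗⟩ ∈ Q_{κ,δ} and g a pair ⟨f_{ht(t)-1}, ξ⟩, ξ < δ) is dense in the two-step iteration Q_{κ,δ} * Ḟ_{κ,δ}. -/

import Mathlib

universe u

/-- A node of the binary tree `2^{<κ}`: a binary sequence of some ordinal length. -/
def BNode : Type (u + 1) :=
  Σ β : Ordinal.{u}, ({x : Ordinal.{u} // x < β} → Bool)

/-- The height (level) of a node is its length. -/
def BNode.ht (s : BNode.{u}) : Ordinal.{u} := s.1

/-- The restriction of a node to a smaller length. -/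
def BNode.restrict (t : BNode.{u}) (β : Ordinal.{u}) (h : β ≤ t.1) : BNode.{u} :=
  ⟨β, fun x => t.2 ⟨x.1, lt_of_lt_of_le x.2 h⟩⟩

/-- Tree order on nodes: end extension. -/
def BNode.le (s t : BNode.{u}) : Prop :=
  s.1 ≤ t.1 ∧ ∀ x : {x : Ordinal.{u} // x < s.1}, ∀ hx : x.1 < t.1, s.2 x = t.2 ⟨x.1, hx⟩

/-- Strict tree order on nodes. -/
def BNode.slt (s t : BNode.{u}) : Prop := BNode.le s t ∧ s.1 < t.1

/-- Replace the initial segment of `t` of length `s₁.1` by `s₁` ("swapping stems"). -/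
noncomputable def BNode.swap (s₁ t : BNode.{u}) (h : s₁.1 ≤ t.1) : BNode.{u} :=
  ⟨t.1, fun x => if hx : x.1 < s₁.1 then s₁.2 ⟨x.1, hx⟩ else t.2 x⟩

/-- `C` is club in `κ`: unbounded in `κ` and closed under suprema below `κ`. -/
def IsClubIn (C : Set Ordinal.{u}) (κ : Ordinal.{u}) : Prop :=
  (∀ α < κ, ∃ β ∈ C, α < β ∧ β < κ) ∧
    ∀ α < κ, (0 : Ordinal.{u}) < α →
      (∀ β < α, ∃ γ ∈ C, β < γ ∧ γ < α) → α ∈ C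

/-- `S` is stationary in `κ`: it meets every club subset of `κ`. -/
def IsStationaryIn (S : Set Ordinal.{u}) (κ : Ordinal.{u}) : Prop :=
  ∀ C : Set Ordinal.{u}, IsClubIn C κ → ∃ x, x ∈ S ∧ x ∈ C ∧ x < κ

/-- `κ` is Mahlo: inaccessible, and the regular cardinals below `κ` are stationary. -/
def IsMahlo (κ : Cardinal.{u}) : Prop :=
  κ.IsInaccessible ∧
    IsStationaryIn {o : Ordinal.{u} | o.card.IsRegular ∧ o.card.ord = o} κ.ord

/-- `κ` is 2-Mahlo: Mahlo, and the Mahlo cardinals below `κ` are stationary. -/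
def Is2Mahlo (κ : Cardinal.{u}) : Prop :=
  IsMahlo κ ∧ IsStationaryIn {o : Ordinal.{u} | IsMahlo o.card ∧ o.card.ord = o} κ.ord

/-- A condition of Gitik's forcing `Q_{κ,δ}`: a normal homogeneous subtree of `2^{<κ}`
of successor height `top + 1 < κ`, together with a `δ`-ascent path `f` through it. -/
structure QCond (κ δ : Ordinal.{u}) : Type (u + 1) where
  /-- the top level of the tree; the tree has successor height `top + 1`. -/
  top : Ordinal.{u}
  top_lt : top + 1 < κ
  /-- the tree. -/
  T : Set BNode.{u}
  mem_ht : ∀ t ∈ T, BNode.ht t < top + 1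
  levels_nonempty : ∀ α < top + 1, ∃ t ∈ T, BNode.ht t = α
  downward_closed : ∀ t ∈ T, ∀ β : Ordinal.{u}, ∀ h : β ≤ BNode.ht t,
    BNode.restrict t β h ∈ T
  /-- normality: every node extends to every higher level below the height. -/
  normal : ∀ t ∈ T, ∀ α : Ordinal.{u}, BNode.ht t ≤ α → α < top + 1 →
    ∃ s ∈ T, BNode.ht s = α ∧ BNode.le t s
  /-- homogeneity: the cone above a node is invariant under swapping stems on a level. -/
  homog : ∀ s₀ ∈ T, ∀ s₁ ∈ T, BNode.ht s₀ = BNode.ht s₁ →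
    ∀ t ∈ T, BNode.le s₀ t → ∀ h : BNode.ht s₁ ≤ BNode.ht t, BNode.swap s₁ t h ∈ T
  /-- the `δ`-ascent path. -/
  f : Ordinal.{u} → Ordinal.{u} → BNode.{u}
  f_mem : ∀ α < top + 1, ∀ υ < δ, f α υ ∈ T ∧ BNode.ht (f α υ) = α
  f_ascent : ∀ α β : Ordinal.{u}, α < β → β < top + 1 →
    ∃ ξ < δ, ∀ υ : Ordinal.{u}, ξ ≤ υ → υ < δ → BNode.slt (f α υ) (f β υ)

/-- The order on `Q_{κ,δ}`: end extension of the tree and of the ascent path. -/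
def QLe {κ δ : Ordinal.{u}} (p q : QCond.{u} κ δ) : Prop :=
  q.top ≤ p.top ∧ q.T = {t ∈ p.T | BNode.ht t < q.top + 1} ∧
    ∀ α ≤ q.top, ∀ υ < δ, p.f α υ = q.f α υ

/-- A condition of the dense set `R₀` in `Q_{κ,δ} * Ḟ_{κ,δ}`: a condition `⟨t, f⃗⟩` of
`Q_{κ,δ}` together with `g = ⟨f_{ht(t)-1}, ξ⟩` for some `ξ < δ`, the `F`-part acting at
the top level of the tree. -/
structure RCond (κ δ : Ordinal.{u}) extends QCond.{u} κ δ : Type (u + 1) where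
  /-- the starting point of the `F_{κ,δ}`-condition. -/
  ξ : Ordinal.{u}
  ξ_lt : ξ < δ

/-- The order on `R₀`: extension in `Q_{κ,δ}`, equality of the `ξ`'s, and coordinatewise
tree-extension of the top functions above `ξ`. -/
def RLe {κ δ : Ordinal.{u}} (p q : RCond.{u} κ δ) : Prop :=
  QLe p.toQCond q.toQCond ∧ p.ξ = q.ξ ∧
    ∀ υ : Ordinal.{u}, p.ξ ≤ υ → υ < δ → BNode.le (q.f q.top υ) (p.f p.top υ)

/-- A condition of the two-step iteration `Q_{κ,δ} * Ḟ_{κ,δ}`: a condition `q ∈ Q_{κ,δ}`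
together with a `Q_{κ,δ}`-name `N` for a condition of `F_{κ,δ}`.  Since a condition of
`F_{κ,δ}` is a pair `⟨f_α, ξ⟩` determined by two ordinals, the name is given by the sets
`N α ξ` of conditions (below `q`) forcing its value to be `⟨f_α, ξ⟩`. -/
structure ItCond (κ δ : Ordinal.{u}) : Type (u + 1) where
  /-- the `Q_{κ,δ}`-part. -/
  q : QCond.{u} κ δ
  /-- the name for the `F_{κ,δ}`-part. -/
  N : Ordinal.{u} → Ordinal.{u} → Set (QCond.{u} κ δ)
  coherent : ∀ α ξ : Ordinal.{u}, ∀ r ∈ N α ξ, QLe r q ∧ α ≤ r.top ∧ ξ < δ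
  down_closed : ∀ α ξ : Ordinal.{u}, ∀ r ∈ N α ξ, ∀ r' : QCond.{u} κ δ,
    QLe r' r → r' ∈ N α ξ
  value_unique : ∀ α₁ ξ₁ α₂ ξ₂ : Ordinal.{u}, ∀ r : QCond.{u} κ δ,
    r ∈ N α₁ ξ₁ → r ∈ N α₂ ξ₂ → α₁ = α₂ ∧ ξ₁ = ξ₂
  densely_decided : ∀ r : QCond.{u} κ δ, QLe r q →
    ∃ r' : QCond.{u} κ δ, QLe r' r ∧ ∃ α ξ : Ordinal.{u}, r' ∈ N α ξ

/-- The iteration order on `Q_{κ,δ} * Ḟ_{κ,δ}`: the `Q`-parts extend and the `Q`-part of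
the extension forces the named `F`-conditions to extend (same `ξ` and coordinatewise
tree-extension above `ξ`, as computed from any condition deciding both names). -/
def ItLe {κ δ : Ordinal.{u}} (p q : ItCond.{u} κ δ) : Prop :=
  QLe p.q q.q ∧
    ∀ r : QCond.{u} κ δ, QLe r p.q → ∀ α₁ ξ₁ α₂ ξ₂ : Ordinal.{u},
      r ∈ p.N α₁ ξ₁ → r ∈ q.N α₂ ξ₂ →
        ξ₁ = ξ₂ ∧ ∀ υ : Ordinal.{u}, ξ₁ ≤ υ → υ < δ → BNode.le (r.f α₂ υ) (r.f α₁ υ)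


/- ===================== auxiliary lemmas and constructions ===================== -/

theorem ord_lt_add_one (a : Ordinal.{u}) : a < a + 1 := by
  rw [Ordinal.add_one_eq_succ]; exact Order.lt_succ a

theorem ord_lt_add_one_iff {a b : Ordinal.{u}} : a < b + 1 ↔ a ≤ b := by
  rw [Ordinal.add_one_eq_succ, Order.lt_succ_iff]

namespace BNode

theorem le_rfl' (s : BNode.{u}) : s.le s := ⟨le_rfl, fun _ _ => rfl⟩

theorem le_trans' {s t u : BNode.{u}} (h1 : s.le t) (h2 : t.le u) : s.le u :=
  ⟨h1.1.trans h2.1, fun x hx =>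
    (h1.2 x (lt_of_lt_of_le x.2 h1.1)).trans (h2.2 ⟨x.1, lt_of_lt_of_le x.2 h1.1⟩ hx)⟩

theorem restrict_le' (t : BNode.{u}) (β : Ordinal.{u}) (h : β ≤ t.1) :
    (t.restrict β h).le t := ⟨h, fun _ _ => rfl⟩

theorem le_restrict' {s t : BNode.{u}} (h : s.le t) {β : Ordinal.{u}} (hβ : s.1 ≤ β)
    (hb : β ≤ t.1) : s.le (t.restrict β hb) :=
  ⟨hβ, fun x hx => h.2 x (lt_of_lt_of_le hx hb)⟩

theorem restrict_eq_of_le {s t : BNode.{u}} (h : s.le t) : t.restrict s.1 h.1 = s := by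
  obtain ⟨a, f⟩ := s
  exact congrArg (Sigma.mk a) (funext fun x => (h.2 x _).symm)

theorem restrict_eq_of_le' {s t : BNode.{u}} (h : s.le t) {β : Ordinal.{u}} (hβ : s.1 = β)
    (h' : β ≤ t.1) : t.restrict β h' = s := by
  subst hβ; exact restrict_eq_of_le h

theorem restrict_comm_le {s t : BNode.{u}} (h : s.le t) {β : Ordinal.{u}} (hβ : β ≤ s.1)
    (hβ' : β ≤ t.1) : t.restrict β hβ' = s.restrict β hβ :=
  congrArg (Sigma.mk β)
    (funext fun x => (h.2 ⟨x.1, lt_of_lt_of_le x.2 hβ⟩ (lt_of_lt_of_le x.2 hβ')).symm)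

/-- one-step extension of a node by a bit. -/
noncomputable def bext (t : BNode.{u}) (b : Bool) : BNode.{u} :=
  ⟨t.1 + 1, fun x => if hx : x.1 < t.1 then t.2 ⟨x.1, hx⟩ else b⟩

theorem le_bext (t : BNode.{u}) (b : Bool) : t.le (t.bext b) :=
  ⟨le_of_lt (ord_lt_add_one t.1), fun x hx => by
    show t.2 x = if h : x.1 < t.1 then t.2 ⟨x.1, h⟩ else b
    rw [dif_pos x.2]⟩

/-- all one-step extensions of the top level of a tree. -/
def oneUp (T : Set BNode.{u}) (γ : Ordinal.{u}) : Set BNode.{u} :=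
  {u | u.1 = γ + 1 ∧ ∃ s, s ∈ T ∧ s.1 = γ ∧ BNode.le s u}

theorem bext_mem_oneUp {T : Set BNode.{u}} {γ : Ordinal.{u}} {s : BNode.{u}} (hs : s ∈ T)
    (hγ : s.1 = γ) (b : Bool) : s.bext b ∈ oneUp T γ :=
  ⟨by show s.1 + 1 = γ + 1; rw [hγ], s, hs, hγ, le_bext s b⟩

theorem le_swap_of_le_left {w s₁ t : BNode.{u}} (h : s₁.1 ≤ t.1) (hw : w.le s₁)
    (hwt : w.1 ≤ t.1) : w.le (BNode.swap s₁ t h) :=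
  ⟨hwt, fun x hx => by
    have hxs : x.1 < s₁.1 := lt_of_lt_of_le x.2 hw.1
    show w.2 x = if h' : x.1 < s₁.1 then s₁.2 ⟨x.1, h'⟩ else t.2 ⟨x.1, hx⟩
    rw [dif_pos hxs]
    exact hw.2 x hxs⟩

theorem restrict_swap_le {s₁ t : BNode.{u}} (h : s₁.1 ≤ t.1) {β : Ordinal.{u}}
    (hβ : s₁.1 ≤ β) (hβt : β ≤ t.1) :
    (BNode.swap s₁ (t.restrict β hβt) hβ).le (BNode.swap s₁ t h) := by
  refine ⟨hβt, fun x hx => ?_⟩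
  show (if hxx : x.1 < s₁.1 then s₁.2 ⟨x.1, hxx⟩ else (t.restrict β hβt).2 x)
      = (if hxx : x.1 < s₁.1 then s₁.2 ⟨x.1, hxx⟩ else t.2 ⟨x.1, hx⟩)
  by_cases hxx : x.1 < s₁.1
  · rw [dif_pos hxx, dif_pos hxx]
  · rw [dif_neg hxx, dif_neg hxx]
    rfl

end BNode

theorem QLe_refl {κ δ : Ordinal.{u}} (p : QCond.{u} κ δ) : QLe p p :=
  ⟨le_rfl, Set.ext fun t => ⟨fun h => ⟨h, p.mem_ht t h⟩, fun h => h.1⟩,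
    fun _ _ _ _ => rfl⟩

theorem QLe_trans {κ δ : Ordinal.{u}} {p q r : QCond.{u} κ δ} (h1 : QLe p q)
    (h2 : QLe q r) : QLe p r := by
  refine ⟨h2.1.trans h1.1, ?_, fun a ha υ hυ =>
    (h1.2.2 a (ha.trans h2.1) υ hυ).trans (h2.2.2 a ha υ hυ)⟩
  rw [h2.2.1, h1.2.1]
  ext t
  exact ⟨fun h => ⟨h.1.1, h.2⟩,
    fun h => ⟨⟨h.1, lt_of_lt_of_le h.2 (add_le_add_left h2.1 1)⟩, h.2⟩⟩

section Extend

open scoped Classical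

variable {κ δ : Ordinal.{u}} (q : QCond.{u} κ δ) (α : Ordinal.{u})

/-- a node of the top level of `q` extending a given node. -/
noncomputable def liftTop (t : BNode.{u}) (htm : t ∈ q.T) (hle : t.1 ≤ q.top) :
    BNode.{u} :=
  Classical.choose (q.normal t htm q.top hle (ord_lt_add_one q.top))

theorem liftTop_spec (t : BNode.{u}) (htm : t ∈ q.T) (hle : t.1 ≤ q.top) :
    liftTop q t htm hle ∈ q.T ∧ (liftTop q t htm hle).1 = q.top ∧
      t.le (liftTop q t htm hle) :=
  Classical.choose_spec (q.normal t htm q.top hle (ord_lt_add_one q.top))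

theorem f_ht_le (h2 : α ≤ q.top) {υ : Ordinal.{u}} (hυ : υ < δ) : (q.f α υ).1 ≤ q.top :=
  le_trans (le_of_eq
    ((q.f_mem α (lt_of_le_of_lt h2 (ord_lt_add_one q.top)) υ hυ).2)) h2

/-- a node one level above the top of `q` extending `q.f α υ` (and extending
`q.f q.top υ` whenever the latter extends `q.f α υ`). -/
noncomputable def Fnew (υ : Ordinal.{u}) : BNode.{u} :=
  if h : υ < δ ∧ α ≤ q.top then
    if BNode.le (q.f α υ) (q.f q.top υ) then (q.f q.top υ).bext false
    else (liftTop q (q.f α υ)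
      (q.f_mem α (lt_of_le_of_lt h.2 (ord_lt_add_one q.top)) υ h.1).1
      (f_ht_le q α h.2 h.1)).bext false
  else show BNode.{u} from ⟨0, fun _ => false⟩

theorem Fnew_ht (h2 : α ≤ q.top) {υ : Ordinal.{u}} (hυ : υ < δ) :
    (Fnew q α υ).1 = q.top + 1 := by
  unfold Fnew
  rw [dif_pos (⟨hυ, h2⟩ : υ < δ ∧ α ≤ q.top)]
  split_ifs with hle
  · show (q.f q.top υ).1 + 1 = q.top + 1
    rw [show (q.f q.top υ).1 = q.top from (q.f_mem q.top (ord_lt_add_one _) υ hυ).2]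
  · show (liftTop q _ _ _).1 + 1 = q.top + 1
    rw [(liftTop_spec q _ _ _).2.1]

theorem Fnew_mem (h2 : α ≤ q.top) {υ : Ordinal.{u}} (hυ : υ < δ) :
    Fnew q α υ ∈ BNode.oneUp q.T q.top := by
  unfold Fnew
  rw [dif_pos (⟨hυ, h2⟩ : υ < δ ∧ α ≤ q.top)]
  split_ifs with hle
  · exact BNode.bext_mem_oneUp (q.f_mem q.top (ord_lt_add_one _) υ hυ).1
      (q.f_mem q.top (ord_lt_add_one _) υ hυ).2 false
  · exact BNode.bext_mem_oneUp (liftTop_spec q _ _ _).1 (liftTop_spec q _ _ _).2.1 false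

theorem le_Fnew (h2 : α ≤ q.top) {υ : Ordinal.{u}} (hυ : υ < δ) :
    (q.f α υ).le (Fnew q α υ) := by
  unfold Fnew
  rw [dif_pos (⟨hυ, h2⟩ : υ < δ ∧ α ≤ q.top)]
  split_ifs with hle
  · exact BNode.le_trans' hle (BNode.le_bext _ _)
  · exact BNode.le_trans' (liftTop_spec q _ _ _).2.2 (BNode.le_bext _ _)

theorem top_le_Fnew (h2 : α ≤ q.top) {υ : Ordinal.{u}} (hυ : υ < δ)
    (hle : (q.f α υ).le (q.f q.top υ)) : (q.f q.top υ).le (Fnew q α υ) := by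
  unfold Fnew
  rw [dif_pos (⟨hυ, h2⟩ : υ < δ ∧ α ≤ q.top), if_pos hle]
  exact BNode.le_bext _ _

/-- a point of `δ` past which `q.f q.top` extends `q.f α`. -/
noncomputable def xi0 : Ordinal.{u} :=
  if h : α < q.top then Classical.choose (q.f_ascent α q.top h (ord_lt_add_one q.top))
  else 0

theorem xi0_lt (hδ : 0 < δ) : xi0 q α < δ := by
  unfold xi0
  split_ifs with h
  · exact (Classical.choose_spec (q.f_ascent α q.top h (ord_lt_add_one q.top))).1
  · exact hδ

theorem xi0_spec (h2 : α ≤ q.top) (υ : Ordinal.{u}) (h1 : xi0 q α ≤ υ) (hυ : υ < δ) :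
    (q.f α υ).le (q.f q.top υ) := by
  rcases eq_or_lt_of_le h2 with he | hl
  · rw [he]; exact BNode.le_rfl' _
  · have hs := Classical.choose_spec (q.f_ascent α q.top hl (ord_lt_add_one q.top))
    rw [xi0, dif_pos hl] at h1
    exact (hs.2 υ h1 hυ).1

/-- the one-level extension of `q` whose new top-level ascent-path value extends
`q.f α υ` at every coordinate `υ < δ`. -/
noncomputable def extendQ (hα : α ≤ q.top) (hκ : q.top + 1 + 1 < κ) (hδ : 0 < δ) :
    QCond.{u} κ δ where
  top := q.top + 1
  top_lt := hκ
  T := q.T ∪ BNode.oneUp q.T q.top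
  mem_ht := by
    rintro t (ht | ht)
    · exact lt_trans (q.mem_ht t ht) (ord_lt_add_one _)
    · show t.1 < q.top + 1 + 1
      rw [ht.1]; exact ord_lt_add_one _
  levels_nonempty := by
    intro a ha
    rcases lt_or_ge a (q.top + 1) with h | h
    · obtain ⟨t, htT, hth⟩ := q.levels_nonempty a h
      exact ⟨t, Or.inl htT, hth⟩
    · have hae : a = q.top + 1 := le_antisymm (ord_lt_add_one_iff.1 ha) h
      obtain ⟨t, htT, hth⟩ := q.levels_nonempty q.top (ord_lt_add_one _)
      refine ⟨t.bext false, Or.inr (BNode.bext_mem_oneUp htT hth false), ?_⟩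
      show t.1 + 1 = a
      rw [show t.1 = q.top from hth, hae]
  downward_closed := by
    rintro t (ht | ht) β hβ
    · exact Or.inl (q.downward_closed t ht β hβ)
    · obtain ⟨ht1, s, hsT, hsγ, hst⟩ := ht
      rcases le_or_gt β q.top with hb | hb
      · left
        have hbs : β ≤ s.1 := le_of_le_of_eq hb hsγ.symm
        rw [BNode.restrict_comm_le hst hbs hβ]
        exact q.downward_closed s hsT β hbs
      · have h1 : q.top + 1 ≤ β := by
          rw [Ordinal.add_one_eq_succ]; exact Order.succ_le_of_lt hb
        have hEq : t.1 = β := by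
          rw [ht1]
          exact le_antisymm h1 (hβ.trans_eq ht1)
        right
        rw [BNode.restrict_eq_of_le' (BNode.le_rfl' t) hEq hβ]
        exact ⟨ht1, s, hsT, hsγ, hst⟩
  normal := by
    rintro t htm a hta ha
    rcases lt_or_ge a (q.top + 1) with h | h
    · have htq : t ∈ q.T := by
        rcases htm with h' | h'
        · exact h'
        · exact absurd (h'.1 ▸ hta : q.top + 1 ≤ a) (not_le.2 h)
      obtain ⟨s, hsT, hsh, hts⟩ := q.normal t htq a hta h
      exact ⟨s, Or.inl hsT, hsh, hts⟩
    · have hae : a = q.top + 1 := le_antisymm (ord_lt_add_one_iff.1 ha) h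
      rcases htm with h' | h'
      · have h2 : t.1 ≤ q.top := ord_lt_add_one_iff.1 (q.mem_ht t h')
        obtain ⟨s, hsT, hsh, hts⟩ := q.normal t h' q.top h2 (ord_lt_add_one _)
        refine ⟨s.bext false, Or.inr (BNode.bext_mem_oneUp hsT hsh false), ?_,
          BNode.le_trans' hts (BNode.le_bext s false)⟩
        show s.1 + 1 = a
        rw [show s.1 = q.top from hsh, hae]
      · exact ⟨t, Or.inr h', h'.1.trans hae.symm, BNode.le_rfl' t⟩
  homog := by
    rintro s₀ hs₀ s₁ hs₁ hts t htm hle h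
    rcases htm with htm | htm
    · have ht1 : t.1 < q.top + 1 := q.mem_ht t htm
      have hs₁T : s₁ ∈ q.T := by
        rcases hs₁ with h' | h'
        · exact h'
        · exact absurd (h'.1 ▸ lt_of_le_of_lt h ht1) (lt_irrefl _)
      have hs₀T : s₀ ∈ q.T := by
        have hlt : s₀.1 < q.top + 1 := hts.trans_lt (lt_of_le_of_lt h ht1)
        rcases hs₀ with h' | h'
        · exact h'
        · exact absurd (h'.1 ▸ hlt) (lt_irrefl _)
      exact Or.inl (q.homog s₀ hs₀T s₁ hs₁T hts t htm hle h)
    · obtain ⟨htt, u, huT, huγ, hut⟩ := htm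
      by_cases hb : s₁.1 ≤ q.top
      · have hs₁T : s₁ ∈ q.T := by
          rcases hs₁ with h' | h'
          · exact h'
          · rw [h'.1] at hb; exact absurd hb (not_le.2 (ord_lt_add_one q.top))
        have hs₀le : s₀.1 ≤ q.top := hts.trans_le hb
        have hs₀T : s₀ ∈ q.T := by
          rcases hs₀ with h' | h'
          · exact h'
          · rw [h'.1] at hs₀le; exact absurd hs₀le (not_le.2 (ord_lt_add_one q.top))
        have hq : q.top ≤ t.1 := by rw [htt]; exact le_of_lt (ord_lt_add_one _)
        have hrtT : t.restrict q.top hq ∈ q.T := by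
          rw [BNode.restrict_eq_of_le' hut huγ hq]; exact huT
        have hw := q.homog s₀ hs₀T s₁ hs₁T hts _ hrtT
          (BNode.le_restrict' hle hs₀le hq) hb
        exact Or.inr ⟨htt, BNode.swap s₁ (t.restrict q.top hq) hb, hw, rfl,
          BNode.restrict_swap_le h hb hq⟩
      · have hs₁U : s₁ ∈ BNode.oneUp q.T q.top := by
          rcases hs₁ with h' | h'
          · exact absurd (ord_lt_add_one_iff.1 (q.mem_ht s₁ h')) hb
          · exact h'
        obtain ⟨hs1h, u₁, hu₁T, hu₁γ, hu₁s⟩ := hs₁U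
        refine Or.inr ⟨htt, u₁, hu₁T, hu₁γ, BNode.le_swap_of_le_left h hu₁s ?_⟩
        rw [hu₁γ, htt]
        exact le_of_lt (ord_lt_add_one _)
  f := fun a υ => if a < q.top + 1 then q.f a υ else Fnew q α υ
  f_mem := by
    intro a ha υ hυ
    by_cases h : a < q.top + 1
    · simp only [if_pos h]
      exact ⟨Or.inl (q.f_mem a h υ hυ).1, (q.f_mem a h υ hυ).2⟩
    · have hae : a = q.top + 1 := le_antisymm (ord_lt_add_one_iff.1 ha) (not_lt.1 h)
      simp only [if_neg h]
      refine ⟨Or.inr (Fnew_mem q α hα hυ), ?_⟩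
      show (Fnew q α υ).1 = a
      rw [Fnew_ht q α hα hυ, hae]
  f_ascent := by
    intro a b hab hb
    by_cases h : b < q.top + 1
    · obtain ⟨ζ, hζ, hspec⟩ := q.f_ascent a b hab h
      have ha' : a < q.top + 1 := lt_trans hab h
      refine ⟨ζ, hζ, fun υ h1 h2 => ?_⟩
      simp only [if_pos h, if_pos ha']
      exact hspec υ h1 h2
    · have hbe : b = q.top + 1 := le_antisymm (ord_lt_add_one_iff.1 hb) (not_lt.1 h)
      have ha2 : a ≤ q.top := by rw [hbe] at hab; exact ord_lt_add_one_iff.1 hab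
      have ha' : a < q.top + 1 := lt_of_le_of_lt ha2 (ord_lt_add_one _)
      obtain ⟨ζ, hζδ, hζspec⟩ : ∃ ζ, ζ < δ ∧ ∀ υ, ζ ≤ υ → υ < δ →
          (q.f a υ).le (q.f q.top υ) := by
        rcases eq_or_lt_of_le ha2 with he | hl
        · exact ⟨0, hδ, fun υ _ _ => by rw [he]; exact BNode.le_rfl' _⟩
        · obtain ⟨ζ, hζ, hspec⟩ := q.f_ascent a q.top hl (ord_lt_add_one _)
          exact ⟨ζ, hζ, fun υ h1 h2 => (hspec υ h1 h2).1⟩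
      refine ⟨max (xi0 q α) ζ, max_lt (xi0_lt q α hδ) hζδ, fun υ h1 h2 => ?_⟩
      simp only [if_neg h, if_pos ha']
      have h4 := top_le_Fnew q α hα h2
        (xi0_spec q α hα υ (le_trans (le_max_left _ _) h1) h2)
      refine ⟨BNode.le_trans' (hζspec υ (le_trans (le_max_right _ _) h1) h2) h4, ?_⟩
      have e1 : (q.f a υ).1 = a := (q.f_mem a ha' υ h2).2
      have e2 : (Fnew q α υ).1 = q.top + 1 := Fnew_ht q α hα h2
      rw [e1, e2]
      exact lt_of_le_of_lt ha2 (ord_lt_add_one _)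

theorem extendQ_le (hα : α ≤ q.top) (hκ : q.top + 1 + 1 < κ) (hδ : 0 < δ) :
    QLe (extendQ q α hα hκ hδ) q := by
  refine ⟨le_of_lt (ord_lt_add_one q.top), ?_,
    fun a ha υ _ => if_pos (lt_of_le_of_lt ha (ord_lt_add_one _))⟩
  ext t
  constructor
  · intro h
    exact ⟨Or.inl h, q.mem_ht t h⟩
  · rintro ⟨h1 | h1, h2⟩
    · exact h1
    · exact absurd (h1.1 ▸ h2 : q.top + 1 < q.top + 1) (lt_irrefl _)

theorem extendQ_f_top (hα : α ≤ q.top) (hκ : q.top + 1 + 1 < κ) (hδ : 0 < δ)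
    (υ : Ordinal.{u}) : (extendQ q α hα hκ hδ).f (q.top + 1) υ = Fnew q α υ :=
  if_neg (lt_irrefl _)

end Extend

/-- The set `R₀` (triples `⟨t, f⃗, g⟩` with `⟨t, f⃗⟩ ∈ Q_{κ,δ}` and `g = ⟨f_{ht(t)-1}, ξ⟩`,
`ξ < δ`) is dense in the two-step iteration `Q_{κ,δ} * Ḟ_{κ,δ}`: below any iteration
condition there is one whose `F`-name is decided to act at the top level of its `Q`-part. -/
theorem R0_dense_in_iteration (κ δ : Cardinal.{u})
    (h2M : Is2Mahlo κ) (hδ : δ.IsRegular) (hδκ : δ < κ) :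
    ∀ c : ItCond.{u} κ.ord δ.ord, ∃ c' : ItCond.{u} κ.ord δ.ord, ItLe c' c ∧
      ∃ p : RCond.{u} κ.ord δ.ord, c'.q = p.toQCond ∧
        c'.N = fun α ξ => {r : QCond.{u} κ.ord δ.ord |
          QLe r p.toQCond ∧ α = p.top ∧ ξ = p.ξ} := by
  intro c
  obtain ⟨r, hrq, α, ξ, hrN⟩ := c.densely_decided c.q (QLe_refl c.q)
  obtain ⟨hr_le, hα, hξ⟩ := c.coherent α ξ r hrN
  have hδ0 : (0 : Ordinal.{u}) < δ.ord := by
    rw [← Cardinal.ord_zero]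
    exact Cardinal.ord_lt_ord.2 (lt_of_lt_of_le Cardinal.aleph0_pos hδ.1)
  have hκlim : Order.IsSuccLimit (κ.ord) := Cardinal.isSuccLimit_ord (le_of_lt h2M.1.1.1)
  have htoplt : r.top + 1 + 1 < κ.ord := by
    rw [Ordinal.add_one_eq_succ (r.top + 1)]
    exact hκlim.succ_lt r.top_lt
  set p : QCond.{u} κ.ord δ.ord := extendQ r α hα htoplt hδ0 with hp
  have hple : QLe p r := extendQ_le r α hα htoplt hδ0
  refine ⟨⟨p, fun a ζ => {s | QLe s p ∧ a = p.top ∧ ζ = ξ},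
    fun a ζ s hs => ⟨hs.1, hs.2.1 ▸ hs.1.1, hs.2.2 ▸ hξ⟩,
    fun a ζ s hs s' hs' => ⟨QLe_trans hs' hs.1, hs.2⟩,
    fun a1 z1 a2 z2 s h1 h2 => ⟨h1.2.1.trans h2.2.1.symm, h1.2.2.trans h2.2.2.symm⟩,
    fun s hs => ⟨s, QLe_refl s, p.top, ξ, hs, rfl, rfl⟩⟩,
    ⟨QLe_trans hple hr_le, ?_⟩,
    ⟨p, ξ, hξ⟩, rfl, rfl⟩
  intro s hsle a1 z1 a2 z2 hs1 hs2
  obtain ⟨hsp, ha1, hz1⟩ := hs1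
  have hsr : QLe s r := QLe_trans hsp hple
  have hsN : s ∈ c.N α ξ := c.down_closed α ξ r hrN s hsr
  obtain ⟨hA, hZ⟩ := c.value_unique α ξ a2 z2 s hsN hs2
  refine ⟨hz1.trans hZ, fun υ hυ1 hυ2 => ?_⟩
  have e2 : s.f a2 υ = r.f α υ := by
    rw [← hA]
    rw [hsr.2.2 α hα υ hυ2]
  have e1 : s.f a1 υ = Fnew r α υ := by
    rw [ha1, hsp.2.2 p.top le_rfl υ hυ2]
    exact extendQ_f_top r α hα htoplt hδ0 υ
  rw [e1, e2]
  exact le_Fnew r α hα hυ2
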